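/- Let f : I → ℝ be δ-convex on an interval I (δ ≥ 0) and let X be an I-valued integrable random variable with f(X) integrable. Then E(f(X)) ≥ f(E(X)) − δ. -/

import Mathlib

open MeasureTheory

/-- Degenerate case helper: if `X = a` a.e., the result is immediate. -/
private lemma aux_const_case
    {Ω : Type*} {m0 : MeasurableSpace Ω} {μ : Measure Ω} [IsProbabilityMeasure μ]
    {f : ℝ → ℝ} {X : Ω → ℝ} {a δ : ℝ} (hδ : 0 ≤ δ)
    (h : ∀ᵐ ω ∂μ, X ω = a) :
    f a - δ ≤ ∫ ω, f (X ω) ∂μ := by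
  have : (∫ ω, f (X ω) ∂μ) = f a := by
    rw [integral_congr_ae (g := fun _ => f a) (by filter_upwards [h] with ω hω; rw [hω])]
    simp
  rw [this]; linarith

/-- **Approximate Jensen inequality.** If `f` is `δ`-convex on an interval `I` and `X` is an
`I`-valued integrable random variable with `f ∘ X` integrable (and `E X ∈ I`), then
`E(f(X)) ≥ f(E(X)) - δ`. -/
theorem approximate_jensen
    {Ω : Type*} {m0 : MeasurableSpace Ω} {μ : Measure Ω} [IsProbabilityMeasure μ]
    {I : Set ℝ} (hI : Convex ℝ I) {δ : ℝ} (hδ : 0 ≤ δ) {f : ℝ → ℝ}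
    (hf : ∀ x ∈ I, ∀ y ∈ I, ∀ t : ℝ, 0 ≤ t → t ≤ 1 →
      f (t * x + (1 - t) * y) ≤ t * f x + (1 - t) * f y + δ)
    {X : Ω → ℝ} (hXI : ∀ᵐ ω ∂μ, X ω ∈ I)
    (hXint : Integrable X μ) (hfXint : Integrable (fun ω => f (X ω)) μ)
    (hEX : (∫ ω, X ω ∂μ) ∈ I) :
    f (∫ ω, X ω ∂μ) - δ ≤ ∫ ω, f (X ω) ∂μ := by
  set a := ∫ ω, X ω ∂μ with ha
  -- key inequality: slopes across a
  have key : ∀ x ∈ I, x < a → ∀ y ∈ I, a < y →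
      (f a - f x - δ) / (a - x) ≤ (f y - f a + δ) / (y - a) := by
    intro x hx hxa y hy hay
    rw [div_le_div_iff₀ (by linarith) (by linarith)]
    have ht0 : (0:ℝ) ≤ (y - a) / (y - x) := div_nonneg (by linarith) (by linarith)
    have ht1 : (y - a) / (y - x) ≤ 1 := by
      rw [div_le_one (by linarith)]; linarith
    have h := hf x hx y hy ((y - a) / (y - x)) ht0 ht1
    have hyx : y - x ≠ 0 := by linarith
    have hcomb : (y - a) / (y - x) * x + (1 - (y - a) / (y - x)) * y = a := by
      field_simp; ring
    rw [hcomb] at h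
    have h' : f a * (y - x) ≤ (y - a) * f x + (a - x) * f y + δ * (y - x) := by
      have := mul_le_mul_of_nonneg_right h (le_of_lt (by linarith : (0:ℝ) < y - x))
      calc f a * (y - x) ≤ ((y - a) / (y - x) * f x + (1 - (y - a) / (y - x)) * f y + δ) * (y - x) := this
        _ = (y - a) * f x + (a - x) * f y + δ * (y - x) := by field_simp; ring
    nlinarith
  by_cases h1 : ∃ x ∈ I, x < a
  · by_cases h2 : ∃ y ∈ I, a < y
    · -- main case: supporting line
      obtain ⟨x₀, hx₀, hx₀a⟩ := h1
      obtain ⟨y₀, hy₀, hy₀a⟩ := h2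
      set S : Set ℝ := (fun x => (f a - f x - δ) / (a - x)) '' {x ∈ I | x < a} with hS
      have hSne : S.Nonempty := ⟨_, ⟨x₀, ⟨hx₀, hx₀a⟩, rfl⟩⟩
      have hSbdd : BddAbove S := by
        refine ⟨(f y₀ - f a + δ) / (y₀ - a), ?_⟩
        rintro _ ⟨x, ⟨hx, hxa⟩, rfl⟩
        exact key x hx hxa y₀ hy₀ hy₀a
      set c := sSup S with hc
      have hline : ∀ z ∈ I, f a - δ + c * (z - a) ≤ f z := by
        intro z hz
        rcases lt_trichotomy z a with hza | hza | hza
        · have hcz : (f a - f z - δ) / (a - z) ≤ c :=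
            le_csSup hSbdd ⟨z, ⟨hz, hza⟩, rfl⟩
          have : f a - f z - δ ≤ c * (a - z) := by
            rw [div_le_iff₀ (by linarith)] at hcz; linarith [hcz]
          nlinarith
        · subst hza; simp; linarith
        · have hcz : c ≤ (f z - f a + δ) / (z - a) := by
            apply csSup_le hSne
            rintro _ ⟨x, ⟨hx, hxa⟩, rfl⟩
            exact key x hx hxa z hz hza
          have : c * (z - a) ≤ f z - f a + δ := by
            rw [le_div_iff₀ (by linarith)] at hcz; linarith [hcz]
          linarith
      have hmono : (∫ ω, (f a - δ + c * (X ω - a)) ∂μ) ≤ ∫ ω, f (X ω) ∂μ := by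
        apply integral_mono_ae
        · exact (integrable_const (f a - δ)).add (((hXint.sub (integrable_const a)).const_mul c))
        · exact hfXint
        · filter_upwards [hXI] with ω hω using hline _ hω
      have hint2 : Integrable (fun ω => c * (X ω - a)) μ :=
        (hXint.sub (integrable_const a)).const_mul c
      have hcalc : (∫ ω, (f a - δ + c * (X ω - a)) ∂μ) = f a - δ := by
        rw [integral_add (integrable_const _) hint2, integral_const_mul c,
          integral_sub hXint (integrable_const a)]
        simp [← ha]
      linarith [hmono, hcalc ▸ hmono]
    · -- all of I ≤ a, so X ≤ a a.e., and E X = a forces X = a a.e.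
      push_neg at h2
      have hle : ∀ᵐ ω ∂μ, 0 ≤ a - X ω := by
        filter_upwards [hXI] with ω hω
        have := h2 (X ω) hω; linarith
      have hint0 : (∫ ω, (a - X ω) ∂μ) = 0 := by
        rw [integral_sub (integrable_const a) hXint]; simp [← ha]
      have heq : ∀ᵐ ω ∂μ, X ω = a := by
        have h0 : (fun ω => a - X ω) =ᵐ[μ] 0 := by
          rw [← integral_eq_zero_iff_of_nonneg_ae
            (by filter_upwards [hle] with ω hω; exact hω : 0 ≤ᵐ[μ] fun ω => a - X ω)
            ((integrable_const a).sub hXint)]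
          rw [integral_sub (integrable_const a) hXint]; simp [← ha]
        filter_upwards [h0] with ω hω
        have : a - X ω = 0 := hω
        linarith
      exact aux_const_case hδ heq
  · push_neg at h1
    have heq : ∀ᵐ ω ∂μ, X ω = a := by
      have h0 : (fun ω => X ω - a) =ᵐ[μ] 0 := by
        rw [← integral_eq_zero_iff_of_nonneg_ae
          (by filter_upwards [hXI] with ω hω; simpa using by linarith [h1 (X ω) hω] : 0 ≤ᵐ[μ] fun ω => X ω - a)
          (hXint.sub (integrable_const a))]
        rw [integral_sub hXint (integrable_const a)]; simp [← ha]
      filter_upwards [h0] with ω hω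
      have : X ω - a = 0 := hω
      linarith
    exact aux_const_case hδ heq
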